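/- Let S be a sequence of 2q letters each colored blue or red, with height function h defined by h(0)=0, h(i)=h(i−1)+1 if the i-th letter is blue and h(i)=h(i−1)−1 if red. Suppose h(2q)=0, h(i)≠0 for all 1 ≤ i ≤ 2q−1, and the first letter is blue. Then for each j, the position of the j-th blue letter in S is strictly less than the position of the j-th red letter in S. -/

import Mathlib

open Finset

/-- The height at `i`: number of blue (`true`) letters minus number of red (`false`)
letters among the first `i` letters of `S`. -/
def height (N : ℕ) (S : Fin N → Bool) (i : ℕ) : ℤ :=
  ((univ.filter (fun j : Fin N => j.val < i ∧ S j = true)).card : ℤ) -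
  ((univ.filter (fun j : Fin N => j.val < i ∧ S j = false)).card : ℤ)

lemma card_succ (N : ℕ) (S : Fin N → Bool) (i : ℕ) (hi : i < N) (b : Bool) :
    (univ.filter (fun j : Fin N => j.val < i + 1 ∧ S j = b)).card
      = (univ.filter (fun j : Fin N => j.val < i ∧ S j = b)).card
        + (if S ⟨i, hi⟩ = b then 1 else 0) := by
  by_cases h : S ⟨i, hi⟩ = b
  · rw [if_pos h]
    have : (univ.filter (fun j : Fin N => j.val < i + 1 ∧ S j = b))
        = insert ⟨i, hi⟩ (univ.filter (fun j : Fin N => j.val < i ∧ S j = b)) := by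
      ext x
      simp only [mem_filter, mem_univ, true_and, mem_insert]
      constructor
      · rintro ⟨hx1, hx2⟩
        rcases Nat.lt_succ_iff_lt_or_eq.mp hx1 with h' | h'
        · exact Or.inr ⟨h', hx2⟩
        · exact Or.inl (Fin.ext h')
      · rintro (rfl | ⟨hx1, hx2⟩)
        · exact ⟨Nat.lt_succ_self _, h⟩
        · exact ⟨Nat.lt_succ_of_lt hx1, hx2⟩
    rw [this, card_insert_of_notMem (by simp)]
  · rw [if_neg h]
    have : (univ.filter (fun j : Fin N => j.val < i + 1 ∧ S j = b))
        = (univ.filter (fun j : Fin N => j.val < i ∧ S j = b)) := by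
      ext x
      simp only [mem_filter, mem_univ, true_and]
      constructor
      · rintro ⟨hx1, hx2⟩
        rcases Nat.lt_succ_iff_lt_or_eq.mp hx1 with h' | h'
        · exact ⟨h', hx2⟩
        · have hx : x = (⟨i, hi⟩ : Fin N) := Fin.ext h'
          rw [hx] at hx2; exact absurd hx2 h
      · rintro ⟨hx1, hx2⟩
        exact ⟨Nat.lt_succ_of_lt hx1, hx2⟩
    rw [this]; omega

lemma height_succ (N : ℕ) (S : Fin N → Bool) (i : ℕ) (hi : i < N) :
    height N S (i + 1) = height N S i + (if S ⟨i, hi⟩ = true then 1 else -1) := by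
  unfold height
  rw [card_succ N S i hi true, card_succ N S i hi false]
  cases hS : S ⟨i, hi⟩ <;> simp [hS] <;> push_cast <;> ring

lemma height_zero (N : ℕ) (S : Fin N → Bool) : height N S 0 = 0 := by
  unfold height; simp

lemma height_nonneg (q : ℕ) (hq : 1 ≤ q) (S : Fin (2 * q) → Bool)
    (hne : ∀ i, 1 ≤ i → i ≤ 2 * q - 1 → height (2 * q) S i ≠ 0)
    (hfirst : S ⟨0, by omega⟩ = true) :
    ∀ i, i ≤ 2 * q → 0 ≤ height (2 * q) S i := by
  intro i
  induction i with
  | zero => intro _; rw [height_zero]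
  | succ n ih =>
    intro hn
    have hn' : n < 2 * q := by omega
    rw [height_succ (2 * q) S n hn']
    have h0 := ih (by omega)
    rcases Nat.eq_zero_or_pos n with rfl | hpos
    · rw [height_zero, hfirst]; norm_num
    · by_cases hlt : n + 1 ≤ 2 * q - 1
      · -- height n ≠ 0 too? n ≥ 1, n ≤ 2q-1
        have h1 : height (2 * q) S n ≠ 0 := hne n hpos (by omega)
        have : 1 ≤ height (2 * q) S n := by omega
        split <;> omega
      · -- n + 1 = 2q, so n ≥ 1 and n ≤ 2q - 1
        have h1 : height (2 * q) S n ≠ 0 := hne n hpos (by omega)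
        have : 1 ≤ height (2 * q) S n := by omega
        split <;> omega

lemma card_filter_lt_orderIso {N m : ℕ} (T : Finset (Fin N)) (h : T.card = m) (k : Fin m) :
    (T.filter (fun x => x < (T.orderIsoOfFin h k : Fin N))).card = k := by
  have hinj : Function.Injective (fun k' : Fin m => ((T.orderIsoOfFin h k' : Fin N))) := by
    intro a b hab
    exact (T.orderIsoOfFin h).injective (Subtype.ext hab)
  have heq : T.filter (fun x => x < (T.orderIsoOfFin h k : Fin N))
      = (Finset.Iio k).image (fun k' => ((T.orderIsoOfFin h k' : Fin N))) := by
    ext x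
    simp only [mem_filter, Finset.mem_image, Finset.mem_Iio]
    constructor
    · rintro ⟨hx, hlt⟩
      refine ⟨(T.orderIsoOfFin h).symm ⟨x, hx⟩, ?_, ?_⟩
      · rw [← OrderIso.lt_iff_lt (T.orderIsoOfFin h), OrderIso.apply_symm_apply]
        exact Subtype.coe_lt_coe.mp hlt
      · simp
    · rintro ⟨k', hk', rfl⟩
      refine ⟨(T.orderIsoOfFin h k').2, ?_⟩
      exact Subtype.coe_lt_coe.mpr ((T.orderIsoOfFin h).lt_iff_lt.mpr hk')
  rw [heq, Finset.card_image_of_injective _ hinj, Fin.card_Iio]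

lemma card_filter_le_orderIso {N m : ℕ} (T : Finset (Fin N)) (h : T.card = m) (k : Fin m) :
    (T.filter (fun x => x ≤ (T.orderIsoOfFin h k : Fin N))).card = k + 1 := by
  have hmem : (T.orderIsoOfFin h k : Fin N) ∈ T := (T.orderIsoOfFin h k).2
  have : T.filter (fun x => x ≤ (T.orderIsoOfFin h k : Fin N))
      = insert (T.orderIsoOfFin h k : Fin N)
          (T.filter (fun x => x < (T.orderIsoOfFin h k : Fin N))) := by
    ext x
    simp only [mem_filter, mem_insert]
    constructor
    · rintro ⟨hx, hle⟩
      rcases lt_or_eq_of_le hle with h' | h'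
      · exact Or.inr ⟨hx, h'⟩
      · exact Or.inl h'
    · rintro (rfl | ⟨hx, hlt⟩)
      · exact ⟨hmem, le_refl _⟩
      · exact ⟨hx, le_of_lt hlt⟩
  rw [this, card_insert_of_notMem (by rw [mem_filter]; exact fun hx => lt_irrefl _ hx.2), card_filter_lt_orderIso T h k]

theorem stmt1 (q : ℕ) (hq : 1 ≤ q) (S : Fin (2 * q) → Bool)
    (hlast : height (2 * q) S (2 * q) = 0)
    (hne : ∀ i, 1 ≤ i → i ≤ 2 * q - 1 → height (2 * q) S i ≠ 0)
    (hfirst : S ⟨0, by omega⟩ = true)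
    (B R : Finset (Fin (2 * q)))
    (hB : B = univ.filter (fun j => S j = true))
    (hR : R = univ.filter (fun j => S j = false))
    (j : ℕ) (hjB : j < B.card) (hjR : j < R.card) :
    ((B.orderIsoOfFin rfl ⟨j, hjB⟩ : Fin (2 * q)) : ℕ) <
    ((R.orderIsoOfFin rfl ⟨j, hjR⟩ : Fin (2 * q)) : ℕ) := by
  set b : Fin (2 * q) := (B.orderIsoOfFin rfl ⟨j, hjB⟩ : Fin (2 * q)) with hb
  set r : Fin (2 * q) := (R.orderIsoOfFin rfl ⟨j, hjR⟩ : Fin (2 * q)) with hr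
  have hbB : b ∈ B := (B.orderIsoOfFin rfl ⟨j, hjB⟩).2
  have hrR : r ∈ R := (R.orderIsoOfFin rfl ⟨j, hjR⟩).2
  have hSb : S b = true := by rw [hB] at hbB; exact (mem_filter.mp hbB).2
  have hSr : S r = false := by rw [hR] at hrR; exact (mem_filter.mp hrR).2
  have hred : (R.filter (fun x => x ≤ r)).card = j + 1 :=
    card_filter_le_orderIso R rfl ⟨j, hjR⟩
  have hfr : univ.filter (fun x : Fin (2 * q) => x.val < r.val + 1 ∧ S x = false)
      = R.filter (fun x => x ≤ r) := by
    ext x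
    simp only [mem_filter, mem_univ, true_and, hR, Fin.le_def, Nat.lt_succ_iff]
    tauto
  have hfb : univ.filter (fun x : Fin (2 * q) => x.val < r.val + 1 ∧ S x = true)
      = B.filter (fun x => x ≤ r) := by
    ext x
    simp only [mem_filter, mem_univ, true_and, hB, Fin.le_def, Nat.lt_succ_iff]
    tauto
  have hh := height_nonneg q hq S hne hfirst (r.val + 1) (by omega)
  unfold height at hh
  rw [hfr, hfb, hred] at hh
  have hcard : j + 1 ≤ (B.filter (fun x => x ≤ r)).card := by
    exact_mod_cast le_of_sub_nonneg hh
  by_contra hcon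
  have hrb : r < b := by
    have hle : r ≤ b := Fin.le_def.mpr (Nat.le_of_not_lt hcon)
    rcases lt_or_eq_of_le hle with h | h
    · exact h
    · rw [h] at hSr; rw [hSr] at hSb; exact absurd hSb (by simp)
  have hsub : B.filter (fun x => x ≤ r) ⊆ B.filter (fun x => x < b) := by
    intro x hx
    simp only [mem_filter] at hx ⊢
    exact ⟨hx.1, lt_of_le_of_lt hx.2 hrb⟩
  have hblt : (B.filter (fun x => x < b)).card = j :=
    card_filter_lt_orderIso B rfl ⟨j, hjB⟩
  have := card_le_card hsub
  omega
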